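/- The quaternary Rudin–Shapiro sequence u contains a palindromic factor of length ℓ exactly for ℓ ∈ {1, 3, 5, 7}: for each such ℓ there is a palindromic factor of length ℓ in u, and for every other ℓ ≥ 1 there is none. -/
import Mathlib

/-- First letters of the substitution `σ : a ↦ ab, b ↦ ac, c ↦ db, d ↦ dc`
(letters `a = 0, b = 1, c = 2, d = 3`). -/
def rsQFst : Fin 4 → Fin 4 := ![0, 0, 3, 3]

/-- Second letters of the substitution `σ : a ↦ ab, b ↦ ac, c ↦ db, d ↦ dc`. -/
def rsQSnd : Fin 4 → Fin 4 := ![1, 2, 1, 2]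

/-- The quaternary Rudin–Shapiro sequence: the fixed point of `σ` starting with `a`,
given by `u 0 = a`, `u (2n) = ` first letter of `σ (u n)`, `u (2n+1) = ` second
letter of `σ (u n)`. -/
def rsQ : ℕ → Fin 4
  | 0 => 0
  | (n + 1) =>
      if (n + 1) % 2 = 0 then rsQFst (rsQ ((n + 1) / 2))
      else rsQSnd (rsQ ((n + 1) / 2))
  decreasing_by all_goals exact Nat.div_lt_self (Nat.succ_pos n) one_lt_two

/-- The sequence `x` contains a palindromic factor of length `ℓ`. -/
def HasPalFactor {A : Type*} (x : ℕ → A) (ℓ : ℕ) : Prop :=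
  ∃ i : ℕ, ∀ j < ℓ, x (i + j) = x (i + ℓ - 1 - j)

/-- The sequence `x` is palindromic: it contains palindromic factors of
arbitrarily large length. -/
def Palindromic {A : Type*} (x : ℕ → A) : Prop :=
  ∀ N : ℕ, ∃ ℓ : ℕ, N ≤ ℓ ∧ HasPalFactor x ℓ

lemma rsQ_even (k : ℕ) : rsQ (2*k) = rsQFst (rsQ k) := by
  cases k with
  | zero => simp [rsQ]; rfl
  | succ m =>
    rw [show 2*(m+1) = (2*m+1)+1 by ring, rsQ, if_pos (by omega),
        show (2*m+1+1)/2 = m+1 by omega]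

lemma rsQ_odd (k : ℕ) : rsQ (2*k+1) = rsQSnd (rsQ k) := by
  rw [show 2*k+1 = (2*k)+1 by rfl, rsQ, if_neg (by omega),
      show (2*k+1)/2 = k by omega]

lemma v0 : rsQ 0 = 0 := by simp [rsQ]

lemma v1 : rsQ 1 = 1 := by have h := rsQ_odd 0; norm_num at h; rw [h, v0]; rfl

lemma v2 : rsQ 2 = 0 := by have h := rsQ_even 1; norm_num at h; rw [h, v1]; rfl

lemma v3 : rsQ 3 = 2 := by have h := rsQ_odd 1; norm_num at h; rw [h, v1]; rfl

lemma v4 : rsQ 4 = 0 := by have h := rsQ_even 2; norm_num at h; rw [h, v2]; rfl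

lemma v5 : rsQ 5 = 1 := by have h := rsQ_odd 2; norm_num at h; rw [h, v2]; rfl

lemma v6 : rsQ 6 = 3 := by have h := rsQ_even 3; norm_num at h; rw [h, v3]; rfl

lemma v7 : rsQ 7 = 1 := by have h := rsQ_odd 3; norm_num at h; rw [h, v3]; rfl

lemma v8 : rsQ 8 = 0 := by have h := rsQ_even 4; norm_num at h; rw [h, v4]; rfl

lemma v9 : rsQ 9 = 1 := by have h := rsQ_odd 4; norm_num at h; rw [h, v4]; rfl

lemma v10 : rsQ 10 = 0 := by have h := rsQ_even 5; norm_num at h; rw [h, v5]; rfl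

lemma v11 : rsQ 11 = 2 := by have h := rsQ_odd 5; norm_num at h; rw [h, v5]; rfl

lemma v12 : rsQ 12 = 3 := by have h := rsQ_even 6; norm_num at h; rw [h, v6]; rfl

lemma v13 : rsQ 13 = 2 := by have h := rsQ_odd 6; norm_num at h; rw [h, v6]; rfl

lemma v14 : rsQ 14 = 0 := by have h := rsQ_even 7; norm_num at h; rw [h, v7]; rfl

lemma v15 : rsQ 15 = 2 := by have h := rsQ_odd 7; norm_num at h; rw [h, v7]; rfl

lemma v16 : rsQ 16 = 0 := by have h := rsQ_even 8; norm_num at h; rw [h, v8]; rfl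

lemma v17 : rsQ 17 = 1 := by have h := rsQ_odd 8; norm_num at h; rw [h, v8]; rfl

lemma v18 : rsQ 18 = 0 := by have h := rsQ_even 9; norm_num at h; rw [h, v9]; rfl

lemma v19 : rsQ 19 = 2 := by have h := rsQ_odd 9; norm_num at h; rw [h, v9]; rfl

lemma v20 : rsQ 20 = 0 := by have h := rsQ_even 10; norm_num at h; rw [h, v10]; rfl

def rsL : List (List (Fin 4)) := [[0, 1, 0, 2, 0, 1, 3, 1, 0],
  [0, 1, 0, 2, 0, 1, 3, 1, 3],
  [0, 1, 0, 2, 3, 2, 0, 2, 0],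
  [0, 1, 0, 2, 3, 2, 0, 2, 3],
  [0, 1, 3, 1, 0, 1, 0, 2, 0],
  [0, 1, 3, 1, 0, 1, 0, 2, 3],
  [0, 1, 3, 1, 3, 2, 3, 1, 0],
  [0, 1, 3, 1, 3, 2, 3, 1, 3],
  [0, 2, 0, 1, 0, 2, 0, 1, 3],
  [0, 2, 0, 1, 0, 2, 3, 2, 0],
  [0, 2, 0, 1, 3, 1, 0, 1, 0],
  [0, 2, 0, 1, 3, 1, 3, 2, 3],
  [0, 2, 3, 2, 0, 2, 0, 1, 0],
  [0, 2, 3, 2, 0, 2, 3, 2, 3],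
  [0, 2, 3, 2, 3, 1, 0, 1, 3],
  [0, 2, 3, 2, 3, 1, 3, 2, 0],
  [1, 0, 1, 0, 2, 0, 1, 3, 1],
  [1, 0, 1, 0, 2, 3, 2, 0, 2],
  [1, 0, 1, 3, 1, 0, 1, 0, 2],
  [1, 0, 1, 3, 1, 3, 2, 3, 1],
  [1, 0, 2, 0, 1, 3, 1, 0, 1],
  [1, 0, 2, 0, 1, 3, 1, 3, 2],
  [1, 0, 2, 3, 2, 0, 2, 0, 1],
  [1, 0, 2, 3, 2, 0, 2, 3, 2],
  [1, 3, 1, 0, 1, 0, 2, 0, 1],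
  [1, 3, 1, 0, 1, 0, 2, 3, 2],
  [1, 3, 1, 3, 2, 3, 1, 0, 1],
  [1, 3, 1, 3, 2, 3, 1, 3, 2],
  [1, 3, 2, 0, 2, 0, 1, 0, 2],
  [1, 3, 2, 0, 2, 3, 2, 3, 1],
  [1, 3, 2, 3, 1, 0, 1, 3, 1],
  [1, 3, 2, 3, 1, 3, 2, 0, 2],
  [2, 0, 1, 0, 2, 0, 1, 3, 1],
  [2, 0, 1, 0, 2, 3, 2, 0, 2],
  [2, 0, 1, 3, 1, 0, 1, 0, 2],
  [2, 0, 1, 3, 1, 3, 2, 3, 1],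
  [2, 0, 2, 0, 1, 0, 2, 0, 1],
  [2, 0, 2, 0, 1, 0, 2, 3, 2],
  [2, 0, 2, 3, 2, 3, 1, 0, 1],
  [2, 0, 2, 3, 2, 3, 1, 3, 2],
  [2, 3, 1, 0, 1, 3, 1, 0, 1],
  [2, 3, 1, 0, 1, 3, 1, 3, 2],
  [2, 3, 1, 3, 2, 0, 2, 0, 1],
  [2, 3, 1, 3, 2, 0, 2, 3, 2],
  [2, 3, 2, 0, 2, 0, 1, 0, 2],
  [2, 3, 2, 0, 2, 3, 2, 3, 1],
  [2, 3, 2, 3, 1, 0, 1, 3, 1],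
  [2, 3, 2, 3, 1, 3, 2, 0, 2],
  [3, 1, 0, 1, 0, 2, 0, 1, 3],
  [3, 1, 0, 1, 0, 2, 3, 2, 0],
  [3, 1, 0, 1, 3, 1, 0, 1, 0],
  [3, 1, 0, 1, 3, 1, 3, 2, 3],
  [3, 1, 3, 2, 0, 2, 0, 1, 0],
  [3, 1, 3, 2, 0, 2, 3, 2, 3],
  [3, 1, 3, 2, 3, 1, 0, 1, 3],
  [3, 1, 3, 2, 3, 1, 3, 2, 0],
  [3, 2, 0, 2, 0, 1, 0, 2, 0],
  [3, 2, 0, 2, 0, 1, 0, 2, 3],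
  [3, 2, 0, 2, 3, 2, 3, 1, 0],
  [3, 2, 0, 2, 3, 2, 3, 1, 3],
  [3, 2, 3, 1, 0, 1, 3, 1, 0],
  [3, 2, 3, 1, 0, 1, 3, 1, 3],
  [3, 2, 3, 1, 3, 2, 0, 2, 0],
  [3, 2, 3, 1, 3, 2, 0, 2, 3]]

/-- Window of length 9. -/
def win (n : ℕ) : List (Fin 4) :=
  [rsQ n, rsQ (n+1), rsQ (n+2), rsQ (n+3), rsQ (n+4), rsQ (n+5), rsQ (n+6), rsQ (n+7), rsQ (n+8)]

def T0 : List (Fin 4) → List (Fin 4)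
  | (a :: b :: c :: d :: e :: _) =>
      [rsQFst a, rsQSnd a, rsQFst b, rsQSnd b, rsQFst c, rsQSnd c, rsQFst d, rsQSnd d, rsQFst e]
  | l => l

def T1 : List (Fin 4) → List (Fin 4)
  | (a :: b :: c :: d :: e :: _) =>
      [rsQSnd a, rsQFst b, rsQSnd b, rsQFst c, rsQSnd c, rsQFst d, rsQSnd d, rsQFst e, rsQSnd e]
  | l => l

lemma win_even (n : ℕ) : win (2*n) = T0 (win n) := by
  simp only [win, T0]
  rw [show 2*n+1 = 2*n+1 by rfl, show 2*n+2 = 2*(n+1) by ring, show 2*n+3 = 2*(n+1)+1 by ring,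
      show 2*n+4 = 2*(n+2) by ring, show 2*n+5 = 2*(n+2)+1 by ring,
      show 2*n+6 = 2*(n+3) by ring, show 2*n+7 = 2*(n+3)+1 by ring,
      show 2*n+8 = 2*(n+4) by ring]
  simp only [rsQ_even, rsQ_odd]

lemma win_odd (n : ℕ) : win (2*n+1) = T1 (win n) := by
  simp only [win, T1]
  rw [show 2*n+1+1 = 2*(n+1) by ring, show 2*n+1+2 = 2*(n+1)+1 by ring,
      show 2*n+1+3 = 2*(n+2) by ring, show 2*n+1+4 = 2*(n+2)+1 by ring,
      show 2*n+1+5 = 2*(n+3) by ring, show 2*n+1+6 = 2*(n+3)+1 by ring,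
      show 2*n+1+7 = 2*(n+4) by ring, show 2*n+1+8 = 2*(n+4)+1 by ring]
  simp only [rsQ_even, rsQ_odd]

lemma win_zero : win 0 = [0, 1, 0, 2, 0, 1, 3, 1, 0] := by
  simp only [win, Nat.zero_add]
  rw [v0, v1, v2, v3, v4, v5, v6, v7, v8]

lemma rsL_closed : ∀ s ∈ rsL, T0 s ∈ rsL ∧ T1 s ∈ rsL ∧ s.reverse ≠ s := by decide

lemma win_mem : ∀ n, win n ∈ rsL := by
  intro n
  induction n using Nat.strong_induction_on with
  | _ n ih =>
    match n, ih with
    | 0, _ => rw [win_zero]; decide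
    | (m+1), ih =>
      rcases Nat.even_or_odd (m+1) with ⟨k, hk⟩ | ⟨k, hk⟩
      · have hk' : m + 1 = 2 * k := by omega
        have hlt : k < m + 1 := by omega
        rw [hk', win_even]
        exact (rsL_closed _ (ih k hlt)).1
      · have hk' : m + 1 = 2 * k + 1 := by omega
        have hlt : k < m + 1 := by omega
        rw [hk', win_odd]
        exact (rsL_closed _ (ih k hlt)).2.1

lemma no_pal9 : ¬ HasPalFactor rsQ 9 := by
  rintro ⟨i, H⟩
  have key : ∀ j : ℕ, j < 9 → rsQ (i + j) = rsQ (i + 8 - j) := by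
    intro j hj
    have := H j hj
    rwa [show i + 9 - 1 - j = i + 8 - j by omega] at this
  have h0 : rsQ i = rsQ (i+8) := by
    have := key 0 (by norm_num); rwa [show i+0 = i by omega, show i+8-0 = i+8 by omega] at this
  have h1 : rsQ (i+1) = rsQ (i+7) := by
    have := key 1 (by norm_num); rwa [show i+8-1 = i+7 by omega] at this
  have h2 : rsQ (i+2) = rsQ (i+6) := by
    have := key 2 (by norm_num); rwa [show i+8-2 = i+6 by omega] at this
  have h3 : rsQ (i+3) = rsQ (i+5) := by
    have := key 3 (by norm_num); rwa [show i+8-3 = i+5 by omega] at this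
  have hrev : (win i).reverse = win i := by
    simp only [win, List.reverse_cons, List.nil_append, List.cons_append,
      List.reverse_nil, List.cons.injEq, and_true]
    exact ⟨h0.symm, h1.symm, h2.symm, h3.symm, trivial, h3, h2, h1, h0⟩
  exact (rsL_closed _ (win_mem i)).2.2 hrev

lemma rsQ_parity (n : ℕ) : (![0,1,1,0] : Fin 4 → ℕ) (rsQ n) = n % 2 := by
  rcases Nat.even_or_odd n with ⟨k, hk⟩ | ⟨k, hk⟩
  · rw [show n = 2*k by omega, rsQ_even]
    have : ∀ x : Fin 4, (![0,1,1,0] : Fin 4 → ℕ) (rsQFst x) = 0 := by decide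
    rw [this]; omega
  · rw [show n = 2*k+1 by omega, rsQ_odd]
    have : ∀ x : Fin 4, (![0,1,1,0] : Fin 4 → ℕ) (rsQSnd x) = 1 := by decide
    rw [this]; omega

/-- The quaternary Rudin–Shapiro sequence contains a palindromic factor of length `ℓ`
exactly for `ℓ ∈ {1, 3, 5, 7}`. -/
theorem rsQ_palindrome_lengths :
    (∀ ℓ ∈ ({1, 3, 5, 7} : Finset ℕ), HasPalFactor rsQ ℓ) ∧
    (∀ ℓ : ℕ, 1 ≤ ℓ → ℓ ∉ ({1, 3, 5, 7} : Finset ℕ) → ¬ HasPalFactor rsQ ℓ) := by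
  constructor
  · intro ℓ hℓ
    fin_cases hℓ
    · exact ⟨0, by intro j hj; interval_cases j; rfl⟩
    · refine ⟨0, ?_⟩
      intro j hj; interval_cases j
      · show rsQ (0+0) = rsQ (0+3-1-0); norm_num; rw [v0, v2]
      · rfl
      · show rsQ (0+2) = rsQ (0+3-1-2); norm_num; rw [v0, v2]
    · refine ⟨1, ?_⟩
      intro j hj; interval_cases j
      · show rsQ (1+0) = rsQ (1+5-1-0); norm_num; rw [v1, v5]
      · show rsQ (1+1) = rsQ (1+5-1-1); norm_num; rw [v2, v4]
      · rfl
      · show rsQ (1+3) = rsQ (1+5-1-3); norm_num; rw [v2, v4]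
      · show rsQ (1+4) = rsQ (1+5-1-4); norm_num; rw [v1, v5]
    · refine ⟨14, ?_⟩
      intro j hj; interval_cases j
      · show rsQ (14+0) = rsQ (14+7-1-0); norm_num; rw [v14, v20]
      · show rsQ (14+1) = rsQ (14+7-1-1); norm_num; rw [v15, v19]
      · show rsQ (14+2) = rsQ (14+7-1-2); norm_num; rw [v16, v18]
      · rfl
      · show rsQ (14+4) = rsQ (14+7-1-4); norm_num; rw [v16, v18]
      · show rsQ (14+5) = rsQ (14+7-1-5); norm_num; rw [v15, v19]
      · show rsQ (14+6) = rsQ (14+7-1-6); norm_num; rw [v14, v20]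
  · rintro ℓ hℓ1 hℓnot ⟨i, H⟩
    simp only [Finset.mem_insert, Finset.mem_singleton] at hℓnot
    push_neg at hℓnot
    rcases Nat.even_or_odd ℓ with ⟨k, hk⟩ | ⟨k, hk⟩
    · -- even length: parity contradiction
      have h0 := H 0 (by omega)
      have p1 := rsQ_parity (i + 0)
      have p2 := rsQ_parity (i + ℓ - 1 - 0)
      rw [h0] at p1
      rw [p2] at p1
      omega
    · -- odd length: must be ≥ 9, extract central palindrome of length 9
      have h9 : 9 ≤ ℓ := by omega
      apply no_pal9
      set m := (ℓ - 9) / 2 with hm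
      have hℓm : ℓ = 2 * m + 9 := by omega
      refine ⟨i + m, ?_⟩
      intro j hj
      have := H (m + j) (by omega)
      rw [show i + (m + j) = i + m + j by ring] at this
      rw [this]
      congr 1
      omega
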